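/- Let C be a category with an initial object, binary coproducts, and pullbacks, which has splitting coproducts and disjoint coproducts. Then every morphism f : A ⟶ B which belongs to the left lifting class of the split epimorphisms and for which there exists some morphism B ⟶ A (i.e. every acyclic cofibration of the generalized core model structure) is a split monomorphism. Consequently the identity functor is a left Quillen functor from the generalized core model structure to the generalized cocore model structure. -/

import Mathlib

open CategoryTheory CategoryTheory.Limits

universe v u

section Preliminaries

variable {C : Type u} [Category.{v} C]

/-- The right lifting class of a class of morphisms. -/
def MorphismPropertyRLP (S : MorphismProperty C) : MorphismProperty C :=
  fun _ _ g => ∀ ⦃A B : C⦄ (f : A ⟶ B), S f → HasLiftingProperty f g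

/-- The left lifting class of a class of morphisms. -/
def MorphismPropertyLLP (S : MorphismProperty C) : MorphismProperty C :=
  fun _ _ f => ∀ ⦃X Y : C⦄ (g : X ⟶ Y), S g → HasLiftingProperty f g

/-- A category has splitting coproducts if every morphism into a binary coproduct
is, up to isomorphism, a coproduct of two morphisms. -/
def HasSplittingCoproducts (C : Type u) [Category.{v} C] [HasBinaryCoproducts C] : Prop :=
  ∀ ⦃X A B : C⦄ (f : X ⟶ A ⨿ B), ∃ (XL XR : C) (fL : XL ⟶ A) (fR : XR ⟶ B)
    (φ : XL ⨿ XR ≅ X), φ.hom ≫ f = coprod.map fL fR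

end Preliminaries

/-- In a category with splitting and disjoint coproducts, every acyclic cofibration
of the generalized core model structure is a split monomorphism; consequently every
fibration of the generalized cocore model structure is a fibration of the
generalized core model structure, i.e. the identity functor is a left Quillen
functor from the generalized core model structure to the generalized cocore model
structure. -/
theorem core_acyclicCofibration_isSplitMono
    {C : Type u} [Category.{v} C] [HasInitial C] [HasBinaryCoproducts C]
    [HasPullbacks C] (hsplit : HasSplittingCoproducts C)
    [∀ A B : C, BinaryCoproductDisjoint A B]
    (W CofCore FibCore FibCocore : MorphismProperty C)
    (hW : W = fun A B _ => Nonempty (B ⟶ A))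
    (hCofCore : CofCore = MorphismPropertyLLP (fun _ _ f => IsSplitEpi f))
    (hFibCore : FibCore = MorphismPropertyRLP (fun _ _ f => CofCore f ∧ W f))
    (hFibCocore : FibCocore = MorphismPropertyRLP (fun _ _ f => IsSplitMono f)) :
    (∀ ⦃A B : C⦄ (f : A ⟶ B), CofCore f → W f → IsSplitMono f) ∧
    (∀ ⦃X Y : C⦄ (g : X ⟶ Y), FibCocore g → FibCore g) := by
  have main : ∀ ⦃A B : C⦄ (f : A ⟶ B), CofCore f → W f → IsSplitMono f := by
    intro A B f hf hwf
    obtain ⟨w⟩ : Nonempty (B ⟶ A) := by rw [hW] at hwf; exact hwf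
    -- the split epi q : A ⨿ B ⟶ B
    set q : A ⨿ B ⟶ B := coprod.desc f (𝟙 B) with hq
    have hqsplit : IsSplitEpi q := ⟨⟨⟨coprod.inr, by rw [hq]; exact coprod.inr_desc _ _⟩⟩⟩
    have hlift : HasLiftingProperty f q := by
      rw [hCofCore] at hf; exact hf q hqsplit
    have sq : CommSq (coprod.inl : A ⟶ A ⨿ B) f q (𝟙 B) := ⟨by rw [hq, Category.comp_id]; exact coprod.inl_desc _ _⟩
    set l : B ⟶ A ⨿ B := sq.lift with hldef
    have hl : f ≫ l = coprod.inl := sq.fac_left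
    -- split l : B ⟶ A ⨿ B
    obtain ⟨BL, BR, lL, lR, φ, hφ⟩ := hsplit l
    -- split f ≫ φ.inv : A ⟶ BL ⨿ BR
    obtain ⟨AL, AR, uL, uR, ψ, hψ⟩ := hsplit (f ≫ φ.inv)
    have key : (f ≫ φ.inv) ≫ coprod.map lL lR = coprod.inl := by
      rw [← hφ]
      simp only [Category.assoc, Iso.inv_hom_id_assoc]
      exact hl
    have key2 : coprod.map uL uR ≫ coprod.map lL lR = ψ.hom ≫ coprod.inl := by
      rw [← hψ, Category.assoc, key]
    -- inl component
    have hL : uL ≫ lL = coprod.inl ≫ ψ.hom := by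
      rw [← cancel_mono (coprod.inl : A ⟶ A ⨿ B)]
      simpa using coprod.inl ≫= key2
    -- inr component: lands in the initial pullback
    have hcomm : (coprod.inr ≫ ψ.hom) ≫ (coprod.inl : A ⟶ A ⨿ B)
        = (uR ≫ lR) ≫ coprod.inr := by
      have := coprod.inr ≫= key2
      simpa only [coprod.inr_map_assoc, coprod.inr_map, Category.assoc] using this.symm
    have hinit : IsInitial (pullback (coprod.inl : A ⟶ A ⨿ B) coprod.inr) :=
      IsInitial.ofBinaryCoproductDisjoint
    set t : AR ⟶ pullback (coprod.inl : A ⟶ A ⨿ B) coprod.inr :=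
      pullback.lift _ _ hcomm with ht
    have htfst : t ≫ pullback.fst _ _ = coprod.inr ≫ ψ.hom := pullback.lift_fst _ _ _
    have htsnd : t ≫ pullback.snd _ _ = uR ≫ lR := pullback.lift_snd _ _ _
    have hR : uR ≫ lR ≫ w = coprod.inr ≫ ψ.hom := by
      rw [← Category.assoc, ← htsnd, Category.assoc, ← htfst]
      congr 1
      exact hinit.hom_ext _ _
    -- the retraction
    refine ⟨⟨φ.inv ≫ coprod.desc lL (lR ≫ w), ?_⟩⟩
    have hψ' : (ψ.hom ≫ f) ≫ φ.inv = coprod.map uL uR := by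
      rw [Category.assoc]; exact hψ
    rw [← cancel_epi ψ.hom, ← Category.assoc, ← Category.assoc, hψ', Category.comp_id]
    apply coprod.hom_ext
    · simp; rw [coprod.inl_desc]; exact hL
    · simp; rw [coprod.inr_desc]; exact hR
  refine ⟨main, ?_⟩
  intro X Y g hg
  rw [hFibCocore] at hg
  rw [hFibCore]
  intro A B f hf
  have := main f hf.1 hf.2
  exact hg f this
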